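/- In a median graph G with a fixed basepoint v₀, let u be a vertex, L a POF outgoing from u, Q the induced hypercube with basis u and Θ-classes L, and u⁺ the anti-basis of Q. Then a vertex v ≠ u⁺ satisfies u ∈ I(v₀,v) and L_{u,v} = L if and only if (i) u⁺ ∈ I(v₀,v) and (ii) for each Θ-class E_j ∈ L_{u⁺,v}, the set L ∪ {E_j} is not a POF. -/

import Mathlib

namespace MedianPaper

variable {V : Type*}

/-- The metric interval `I(u,v)`: vertices on shortest `(u,v)`-paths. -/
def interval (G : SimpleGraph V) (u v : V) : Set V :=
  {w | G.dist u w + G.dist w v = G.dist u v}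

/-- A median graph: a connected graph in which every triple of vertices
has a unique median. -/
def MedianGraph (G : SimpleGraph V) : Prop :=
  G.Connected ∧ ∀ x y z : V, ∃! m : V,
    m ∈ interval G x y ∧ m ∈ interval G y z ∧ m ∈ interval G z x

/-- `u v x y` span a 4-cycle `u-v-y-x-u`, with opposite edge pairs
`(uv, xy)` and `(ux, vy)`. -/
def IsSquare (G : SimpleGraph V) (u v x y : V) : Prop :=
  G.Adj u v ∧ G.Adj x y ∧ G.Adj u x ∧ G.Adj v y ∧ u ≠ y ∧ v ≠ x

/-- Two edges are in relation Θ₀ if they are opposite edges of a common 4-cycle. -/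
def Theta0 (G : SimpleGraph V) (e f : Sym2 V) : Prop :=
  ∃ u v x y : V, IsSquare G u v x y ∧ e = s(u, v) ∧ f = s(x, y)

/-- Θ : the reflexive-transitive closure of Θ₀ on the edges of `G`. -/
def Theta (G : SimpleGraph V) (e f : Sym2 V) : Prop :=
  e ∈ G.edgeSet ∧ f ∈ G.edgeSet ∧ Relation.ReflTransGen (Theta0 G) e f

/-- The Θ-classes of `G`: equivalence classes of edges under Θ. -/
def ThetaClass (G : SimpleGraph V) (C : Set (Sym2 V)) : Prop :=
  ∃ e ∈ G.edgeSet, C = {f | Theta G e f}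

/-- The edge set `C` separates `u` from `v` : they lie in different
components of `G` minus `C`. -/
def Separates (G : SimpleGraph V) (C : Set (Sym2 V)) (u v : V) : Prop :=
  ¬ (G.deleteEdges C).Reachable u v

/-- The signature `σ_{u,v}`: Θ-classes separating `u` from `v`. -/
def signature (G : SimpleGraph V) (u v : V) : Set (Set (Sym2 V)) :=
  {C | ThetaClass G C ∧ Separates G C u v}

/-- `H`, `H'` are the two connected components (halfspaces) of `G` deprived
of the edges in `C`. -/
def IsHalfspacePair (G : SimpleGraph V) (C : Set (Sym2 V)) (H H' : Set V) : Prop :=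
  H.Nonempty ∧ H'.Nonempty ∧ Disjoint H H' ∧ H ∪ H' = Set.univ ∧
  (∀ x ∈ H, ∀ y ∈ H, (G.deleteEdges C).Reachable x y) ∧
  (∀ x ∈ H', ∀ y ∈ H', (G.deleteEdges C).Reachable x y) ∧
  (∀ x ∈ H, ∀ y ∈ H', ¬ (G.deleteEdges C).Reachable x y)

/-- The boundary of a halfspace `H` of the Θ-class `C` : vertices of `H`
incident to an edge of `C`. -/
def boundarySet (G : SimpleGraph V) (C : Set (Sym2 V)) (H : Set V) : Set V :=
  {x | x ∈ H ∧ ∃ y, G.Adj x y ∧ s(x, y) ∈ C}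

/-- Orthogonality of Θ-classes: there is a common square using both. -/
def Orthogonal (G : SimpleGraph V) (C₁ C₂ : Set (Sym2 V)) : Prop :=
  ∃ u v x y : V, IsSquare G u v x y ∧
    s(u, v) ∈ C₁ ∧ s(x, y) ∈ C₁ ∧ s(u, x) ∈ C₂ ∧ s(v, y) ∈ C₂

/-- A pairwise orthogonal family (POF) of Θ-classes. -/
def IsPOF (G : SimpleGraph V) (X : Set (Set (Sym2 V))) : Prop :=
  (∀ C ∈ X, ThetaClass G C) ∧
  ∀ C ∈ X, ∀ C' ∈ X, C ≠ C' → Orthogonal G C C'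

/-- The `k`-dimensional hypercube graph, on subsets of `{1,…,k}`;
two subsets are adjacent iff their symmetric difference has one element. -/
def cubeGraph (k : ℕ) : SimpleGraph (Finset (Fin k)) where
  Adj A B := (symmDiff A B).card = 1
  symm := by
    constructor
    intro A B h
    rwa [symmDiff_comm] at h
  loopless := by
    constructor
    intro A h
    simp [symmDiff_self] at h

/-- `S` induces a hypercube of dimension `k` in `G`. -/
def IsCubeDim (G : SimpleGraph V) (S : Set V) (k : ℕ) : Prop :=
  Nonempty ((G.induce S) ≃g cubeGraph k)

/-- `S` induces a hypercube in `G`. -/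
def IsInducedCube (G : SimpleGraph V) (S : Set V) : Prop :=
  ∃ k, IsCubeDim G S k

/-- The dimension of `G` is `d`: the largest dimension of an induced hypercube. -/
def GraphDim (G : SimpleGraph V) (d : ℕ) : Prop :=
  (∃ S : Set V, IsCubeDim G S d) ∧ ∀ (S : Set V) (k : ℕ), IsCubeDim G S k → k ≤ d

/-- The Θ-classes of the edges of the induced subgraph on `S`. -/
def cubeClasses (G : SimpleGraph V) (S : Set V) : Set (Set (Sym2 V)) :=
  {C | ThetaClass G C ∧ ∃ x ∈ S, ∃ y ∈ S, G.Adj x y ∧ s(x, y) ∈ C}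

/-- With the `v₀`-orientation, `b ∈ S` is the basis of `S`: all edges of `S`
incident to `b` are outgoing from `b`. -/
def IsBasis (G : SimpleGraph V) (v₀ : V) (S : Set V) (b : V) : Prop :=
  b ∈ S ∧ ∀ w ∈ S, G.Adj b w → G.dist v₀ b < G.dist v₀ w

/-- With the `v₀`-orientation, `b ∈ S` is the anti-basis of `S`: all edges of `S`
incident to `b` are ingoing to `b`. -/
def IsAntiBasis (G : SimpleGraph V) (v₀ : V) (S : Set V) (b : V) : Prop :=
  b ∈ S ∧ ∀ w ∈ S, G.Adj b w → G.dist v₀ w < G.dist v₀ b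

/-- `ℰ⁻(v)` : the Θ-classes containing at least one edge ingoing to `v`. -/
def inClasses (G : SimpleGraph V) (v₀ v : V) : Set (Set (Sym2 V)) :=
  {C | ThetaClass G C ∧ ∃ u, G.Adj u v ∧ G.dist v₀ u < G.dist v₀ v ∧ s(u, v) ∈ C}

/-- The ladder set `L_{u,v}`: classes of the signature `σ_{u,v}` having an
edge incident to `u`. -/
def ladder (G : SimpleGraph V) (u v : V) : Set (Set (Sym2 V)) :=
  {C | C ∈ signature G u v ∧ ∃ w, G.Adj u w ∧ s(u, w) ∈ C}

/-- A POF each of whose classes has an edge outgoing from `u`. -/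
def OutgoingPOF (G : SimpleGraph V) (v₀ u : V) (L : Set (Set (Sym2 V))) : Prop :=
  IsPOF G L ∧ ∀ C ∈ L, ∃ w, G.Adj u w ∧ G.dist v₀ u < G.dist v₀ w ∧ s(u, w) ∈ C

/-- A POF each of whose classes has an edge ingoing to `u`. -/
def IngoingPOF (G : SimpleGraph V) (v₀ u : V) (X : Set (Set (Sym2 V))) : Prop :=
  IsPOF G X ∧ ∀ C ∈ X, ∃ w, G.Adj w u ∧ G.dist v₀ w < G.dist v₀ u ∧ s(w, u) ∈ C

/-- `m` is a median of the triple `x, y, z`. -/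
def IsMedian (G : SimpleGraph V) (x y z m : V) : Prop :=
  m ∈ interval G x y ∧ m ∈ interval G y z ∧ m ∈ interval G z x

/-- `b` is the milestone following `a` on the way to `v`: `b` is the anti-basis of
the induced hypercube with basis `a` whose Θ-classes are the ladder set `L_{a,v}`. -/
def NextMilestone (G : SimpleGraph V) (v₀ v a b : V) : Prop :=
  ∃ S : Set V, IsInducedCube G S ∧ IsBasis G v₀ S a ∧ IsAntiBasis G v₀ S b ∧
    cubeClasses G S = ladder G a v

/-- The milestone set `Π(u,v)`: vertices obtained from `u` by iterating the
next-milestone step towards `v`. -/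
def MilestoneSet (G : SimpleGraph V) (v₀ u v : V) : Set V :=
  {p | Relation.ReflTransGen (fun a b => NextMilestone G v₀ v a b) u p}

/-- The penultimate milestone `π̄(u,v)`: the milestone of `Π(u,v)` other than `v`
closest to `v`, i.e. whose next milestone is `v` itself. -/
def IsPenultimate (G : SimpleGraph V) (v₀ u v p : V) : Prop :=
  p ∈ MilestoneSet G v₀ u v ∧ p ≠ v ∧ NextMilestone G v₀ v p v

/-- A convex set of vertices. -/
def ConvexSet (G : SimpleGraph V) (H : Set V) : Prop :=
  ∀ u ∈ H, ∀ v ∈ H, interval G u v ⊆ H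

/-- A gated set of vertices: each vertex has a gate in `H`. -/
def GatedSet (G : SimpleGraph V) (H : Set V) : Prop :=
  ∀ x : V, ∃ g ∈ H, ∀ h ∈ H, g ∈ interval G x h


section Tools

variable {G : SimpleGraph V}

lemma adj_dist_one {a b : V} (h : G.Adj a b) : G.dist a b = 1 :=
  SimpleGraph.dist_eq_one_iff_adj.mpr h

lemma dist_comm' (G : SimpleGraph V) (p q : V) : G.dist p q = G.dist q p :=
  SimpleGraph.dist_comm

lemma adj_dist_ne (hmed : MedianGraph G) {a b : V} (hab : G.Adj a b) (w : V) :
    G.dist w a ≠ G.dist w b := by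
  intro h
  obtain ⟨hconn, hm⟩ := hmed
  obtain ⟨m, ⟨h1, h2, h3⟩, -⟩ := hm w a b
  simp only [interval, Set.mem_setOf_eq] at h1 h2 h3
  rw [adj_dist_one hab] at h2
  have hma : G.dist a m = 0 ∨ G.dist m b = 0 := by omega
  rcases hma with h' | h'
  · have e : a = m := hconn.dist_eq_zero_iff.mp h'
    rw [← e] at h3
    rw [adj_dist_one hab.symm] at h3
    have e1 := dist_comm' G b w
    have e2 := dist_comm' G a w
    omega
  · have e : m = b := hconn.dist_eq_zero_iff.mp h'
    rw [e] at h1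
    rw [adj_dist_one hab.symm] at h1
    have e1 := dist_comm' G b w
    omega

lemma adj_dist_cases (hmed : MedianGraph G) {a b : V} (hab : G.Adj a b) (w : V) :
    G.dist w b = G.dist w a + 1 ∨ G.dist w a = G.dist w b + 1 := by
  have h1 : G.dist w b ≤ G.dist w a + G.dist a b := hmed.1.dist_triangle
  have h2 : G.dist w a ≤ G.dist w b + G.dist b a := hmed.1.dist_triangle
  rw [adj_dist_one hab] at h1
  rw [adj_dist_one hab.symm] at h2
  have h3 := adj_dist_ne hmed hab w
  omega

lemma no_triangle (hmed : MedianGraph G) {a b c : V} (hab : G.Adj a b) (hbc : G.Adj b c) :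
    ¬ G.Adj a c := by
  intro hac
  exact adj_dist_ne hmed hac b (by rw [adj_dist_one hab.symm, adj_dist_one hbc])

lemma common_nbr_dist_two (hmed : MedianGraph G) {a b x : V} (hax : G.Adj a x)
    (hbx : G.Adj b x) (hne : a ≠ b) : G.dist a b = 2 := by
  have h1 : G.dist a b ≤ G.dist a x + G.dist x b := hmed.1.dist_triangle
  rw [adj_dist_one hax, adj_dist_one hbx.symm] at h1
  have h2 : G.dist a b ≠ 0 := fun h => hne (hmed.1.dist_eq_zero_iff.mp h)
  have h3 : G.dist a b ≠ 1 := by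
    intro h
    exact no_triangle hmed hax hbx.symm (SimpleGraph.dist_eq_one_iff_adj.mp h)
  omega

lemma dist_one_adj {a b : V} (h : G.dist a b = 1) : G.Adj a b :=
  SimpleGraph.dist_eq_one_iff_adj.mp h

/-- The quadrangle condition. -/
lemma quad (hmed : MedianGraph G) {u v₁ v₂ w : V} (h1 : G.Adj v₁ w) (h2 : G.Adj v₂ w)
    (hne : v₁ ≠ v₂) (hd : G.dist u v₁ = G.dist u v₂) :
    ∃ t, G.Adj t v₁ ∧ G.Adj t v₂ ∧ G.dist u t + 1 = G.dist u v₁ := by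
  have h12 : G.dist v₁ v₂ = 2 := common_nbr_dist_two hmed h1 h2 hne
  obtain ⟨m, ⟨m1, m2, m3⟩, -⟩ := hmed.2 u v₁ v₂
  simp only [interval, Set.mem_setOf_eq] at m1 m2 m3
  rw [h12] at m2
  have c1 := dist_comm' G v₂ v₁
  have c2 := dist_comm' G v₁ u
  have c3 := dist_comm' G v₂ u
  have hm1 : m ≠ v₁ := by
    intro he
    rw [he] at m3
    omega
  have hm2 : m ≠ v₂ := by
    intro he
    rw [he] at m1
    omega
  have hd1 : G.dist v₁ m ≠ 0 := fun h => hm1 (hmed.1.dist_eq_zero_iff.mp h).symm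
  have hd2 : G.dist m v₂ ≠ 0 := fun h => hm2 (hmed.1.dist_eq_zero_iff.mp h)
  have hdm1 : G.dist v₁ m = 1 := by omega
  have hdm2 : G.dist m v₂ = 1 := by omega
  have c4 := dist_comm' G v₁ m
  refine ⟨m, (dist_one_adj hdm1).symm, dist_one_adj hdm2, ?_⟩
  omega

/-- Opposite corners of a square are at distance 2. -/
lemma square_opp_dist (hmed : MedianGraph G) {u v x y : V} (hsq : IsSquare G u v x y) :
    G.dist v x = 2 ∧ G.dist u y = 2 := by
  obtain ⟨huv, hxy, hux, hvy, huy, hvx⟩ := hsq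
  exact ⟨common_nbr_dist_two hmed huv.symm hux.symm hvx,
    common_nbr_dist_two hmed huv hvy.symm huy⟩

lemma square_rev {u v x y : V} (h : IsSquare G u v x y) : IsSquare G v u y x := by
  obtain ⟨huv, hxy, hux, hvy, huy, hvx⟩ := h
  exact ⟨huv.symm, hxy.symm, hvy, hux, hvx, huy⟩

lemma square_flip {u v x y : V} (h : IsSquare G u v x y) : IsSquare G x y u v := by
  obtain ⟨huv, hxy, hux, hvy, huy, hvx⟩ := h
  exact ⟨hxy, huv, hux.symm, hvy.symm, fun h' => hvx h'.symm, fun h' => huy h'.symm⟩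

lemma square_transfer_lt (hmed : MedianGraph G) {u v x y : V} (hsq : IsSquare G u v x y)
    (w : V) (h : G.dist w u < G.dist w v) : G.dist w x < G.dist w y := by
  obtain ⟨hvx2, huy2⟩ := square_opp_dist hmed hsq
  obtain ⟨huv, hxy, hux, hvy, huy, hvx⟩ := hsq
  have hv : G.dist w v = G.dist w u + 1 := by
    rcases adj_dist_cases hmed huv w with h' | h' <;> omega
  have d1 : G.dist u v = 1 := adj_dist_one huv
  have d2 : G.dist v u = 1 := adj_dist_one huv.symm
  have d3 : G.dist u x = 1 := adj_dist_one hux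
  have d4 : G.dist x u = 1 := adj_dist_one hux.symm
  have d5 : G.dist x y = 1 := adj_dist_one hxy
  have d6 : G.dist y x = 1 := adj_dist_one hxy.symm
  have d7 : G.dist v y = 1 := adj_dist_one hvy
  have d8 : G.dist y v = 1 := adj_dist_one hvy.symm
  have c1 := dist_comm' G u w
  have c2 := dist_comm' G x w
  have c3 := dist_comm' G y w
  have c4 := dist_comm' G v w
  rcases adj_dist_cases hmed hux w with hx | hx
  · rcases adj_dist_cases hmed hvy w with hy | hy
    · omega
    · rcases adj_dist_cases hmed hxy w with hy' | hy'
      · omega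
      · exfalso
        obtain ⟨m, -, hm⟩ := hmed.2 w v x
        have hmu : u = m := by
          apply hm
          simp only [interval, Set.mem_setOf_eq]
          exact ⟨by omega, by omega, by omega⟩
        have hmy : y = m := by
          apply hm
          simp only [interval, Set.mem_setOf_eq]
          exact ⟨by omega, by omega, by omega⟩
        exact huy (hmu.trans hmy.symm)
  · rcases adj_dist_cases hmed hxy w with hy | hy
    · omega
    · exfalso
      rcases adj_dist_cases hmed hvy w with hy' | hy' <;> omega

lemma square_transfer (hmed : MedianGraph G) {u v x y : V} (hsq : IsSquare G u v x y)
    (w : V) : G.dist w u < G.dist w v ↔ G.dist w x < G.dist w y :=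
  ⟨square_transfer_lt hmed hsq w, square_transfer_lt hmed (square_flip hsq) w⟩

end Tools

section Theta
variable {G : SimpleGraph V}

lemma theta0_symm : Symmetric (Theta0 G) := by
  rintro e f ⟨u, v, x, y, hsq, he, hf⟩
  exact ⟨x, y, u, v, square_flip hsq, hf, he⟩

lemma theta_refl {e : Sym2 V} (he : e ∈ G.edgeSet) : Theta G e e :=
  ⟨he, he, Relation.ReflTransGen.refl⟩

lemma theta_symm {e f : Sym2 V} (h : Theta G e f) : Theta G f e :=
  ⟨h.2.1, h.1, by
    haveI : Std.Symm (Theta0 G) := ⟨theta0_symm⟩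
    exact Relation.ReflTransGen.symmetric.symm _ _ h.2.2⟩

lemma theta_trans {e f g : Sym2 V} (h : Theta G e f) (h' : Theta G f g) : Theta G e g :=
  ⟨h.1, h'.2.1, h.2.2.trans h'.2.2⟩

lemma theta_tail {e f g : Sym2 V} (h : Theta G e f) (h' : Theta0 G f g)
    (hg : g ∈ G.edgeSet) : Theta G e g :=
  ⟨h.1, hg, h.2.2.tail h'⟩

/-- Invariance of the Djoković side predicate along Theta. -/
lemma theta_transfer (hmed : MedianGraph G) {a b : V} (hab : G.Adj a b) {f : Sym2 V}
    (h : Relation.ReflTransGen (Theta0 G) s(a, b) f) :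
    ∃ x y, f = s(x, y) ∧ G.Adj x y ∧
      ∀ w, (G.dist w x < G.dist w y ↔ G.dist w a < G.dist w b) := by
  induction h with
  | refl => exact ⟨a, b, rfl, hab, fun w => Iff.rfl⟩
  | tail _ hstep ih =>
    obtain ⟨p, q, hpq_eq, hpq, hw⟩ := ih
    obtain ⟨u, v, x, y, hsq, he', hf⟩ := hstep
    rw [he'] at hpq_eq
    rcases Sym2.eq_iff.mp hpq_eq with ⟨rfl, rfl⟩ | ⟨rfl, rfl⟩
    · exact ⟨x, y, hf, hsq.2.1, fun w =>
        Iff.trans (square_transfer hmed hsq w).symm (hw w)⟩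
    · refine ⟨y, x, by rw [hf, Sym2.eq_swap], hsq.2.1.symm, fun w => ?_⟩
      exact Iff.trans (square_transfer hmed (square_rev hsq) w).symm (hw w)

lemma class_is_edge {C : Set (Sym2 V)} (hC : ThetaClass G C) {f : Sym2 V} (hf : f ∈ C) :
    f ∈ G.edgeSet := by
  obtain ⟨e, he, rfl⟩ := hC
  exact hf.2.1

lemma mem_class_self {e : Sym2 V} (he : e ∈ G.edgeSet) : e ∈ {f | Theta G e f} :=
  theta_refl he

lemma thetaClass_of_edge {a b : V} (hab : G.Adj a b) : ThetaClass G {f | Theta G s(a,b) f} :=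
  ⟨s(a,b), hab, rfl⟩

lemma class_eq_of_mem {C C' : Set (Sym2 V)} (hC : ThetaClass G C) (hC' : ThetaClass G C')
    {f : Sym2 V} (hf : f ∈ C) (hf' : f ∈ C') : C = C' := by
  obtain ⟨e, he, rfl⟩ := hC
  obtain ⟨e', he', rfl⟩ := hC'
  ext g
  constructor
  · intro hg
    exact theta_trans (theta_trans hf' (theta_symm hf)) hg
  · intro hg
    exact theta_trans (theta_trans hf (theta_symm hf')) hg

/-- Step one vertex along a geodesic. -/
lemma exists_step {G : SimpleGraph V} (hconn : G.Connected) {x y : V} (h : G.dist x y ≠ 0) :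
    ∃ z, G.Adj x z ∧ G.dist z y + 1 = G.dist x y := by
  obtain ⟨p, hp⟩ := SimpleGraph.exists_walk_of_dist_ne_zero h
  cases p with
  | nil => rw [← hp] at h; simp at h
  | @cons _ z _ hadj q =>
    refine ⟨z, hadj, ?_⟩
    have h1 : G.dist z y ≤ q.length := SimpleGraph.dist_le q
    have h2 : G.dist x y ≤ G.dist x z + G.dist z y := hconn.dist_triangle
    rw [adj_dist_one hadj] at h2
    simp only [SimpleGraph.Walk.length_cons] at hp
    omega

/-- Djoković implies Theta in median graphs. -/
lemma dj_theta (hmed : MedianGraph G) {a b x y : V} (hab : G.Adj a b) (hxy : G.Adj x y)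
    (h1 : G.dist x a < G.dist x b) (h2 : G.dist y b < G.dist y a) :
    Theta G s(a, b) s(x, y) := by
  suffices H : ∀ k x y, G.Adj x y → G.dist x a < G.dist x b → G.dist y b < G.dist y a →
      G.dist x a = k → Theta G s(a, b) s(x, y) from H _ x y hxy h1 h2 rfl
  intro k
  induction k using Nat.strong_induction_on with
  | _ k ih =>
    intro x y hxy h1 h2 hk
    have exb : G.dist x b = k + 1 := by
      rcases adj_dist_cases hmed hab x with h' | h' <;> omega
    have c1 := dist_comm' G y x
    have eya : G.dist y a ≤ k + 1 := by
      have := hmed.1.dist_triangle (u := y) (v := x) (w := a)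
      rw [adj_dist_one hxy.symm] at this
      omega
    have exb2 : G.dist x b ≤ 1 + G.dist y b := by
      have := hmed.1.dist_triangle (u := x) (v := y) (w := b)
      rw [adj_dist_one hxy] at this
      omega
    have eyb : G.dist y b = k := by omega
    have eya' : G.dist y a = k + 1 := by omega
    rcases Nat.eq_zero_or_pos k with rfl | hkpos
    · have hxa : x = a := hmed.1.dist_eq_zero_iff.mp hk
      have hyb : y = b := hmed.1.dist_eq_zero_iff.mp eyb
      subst hxa; subst hyb
      exact theta_refl hxy
    · -- find neighbour y' of y towards b
      have hd0 : G.dist y b ≠ 0 := by omega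
      obtain ⟨y', hadj, hy'b0⟩ := exists_step hmed.1 hd0
      have hy'b : G.dist y' b = k - 1 := by omega
      have hy'a : G.dist y' a = k := by
        have t1 : G.dist y' a ≤ G.dist y' b + G.dist b a := hmed.1.dist_triangle
        rw [adj_dist_one hab.symm] at t1
        have t2 : G.dist y a ≤ G.dist y y' + G.dist y' a := hmed.1.dist_triangle
        rw [adj_dist_one hadj] at t2
        omega
      have hny : y' ≠ x := by
        intro he
        rw [he] at hy'b
        omega
      obtain ⟨t, htx, hty', hta⟩ := quad hmed (v₁ := x) (v₂ := y') (w := y) (u := a)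
        hxy hadj.symm hny.symm (by rw [dist_comm' G a x, dist_comm' G a y']; omega)
      have hta' : G.dist t a = k - 1 := by
        rw [dist_comm' G t a]
        rw [dist_comm' G a x] at hta
        omega
      have htb : k ≤ G.dist t b := by
        have : G.dist x b ≤ G.dist x t + G.dist t b := hmed.1.dist_triangle
        rw [adj_dist_one htx.symm] at this
        omega
      have hIH : Theta G s(a, b) s(t, y') := by
        have G1 : k - 1 < k := by omega
        have G2 : G.dist t a < G.dist t b := by omega
        have G3 : G.dist y' b < G.dist y' a := by omega
        exact ih (k - 1) G1 t y' hty' G2 G3 hta'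
      have hsq : IsSquare G t y' x y := by
        refine ⟨hty', hxy, htx, hadj.symm, ?_, hny⟩
        intro he
        rw [he] at hta'
        omega
      exact theta_tail hIH ⟨t, y', x, y, hsq, rfl, rfl⟩ hxy
end Theta

section Side
variable {G : SimpleGraph V}

/-- The fundamental side-predicate (halfspace) description of a Θ-class. -/
lemma class_side (hmed : MedianGraph G) {C : Set (Sym2 V)} (hC : ThetaClass G C) :
    ∃ P : V → Prop,
      (∀ x y, G.Adj x y → (s(x, y) ∈ C ↔ ¬(P x ↔ P y))) ∧
      (∀ x y, s(x, y) ∈ C →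
        ((∀ w, G.dist w x < G.dist w y ↔ P w) ∨
         (∀ w, G.dist w x < G.dist w y ↔ ¬ P w))) ∧
      (∀ x y, Separates G C x y ↔ ¬(P x ↔ P y)) := by
  obtain ⟨e, he, rfl⟩ := hC
  induction e using Sym2.ind with
  | _ a b =>
  have hab : G.Adj a b := he
  set C : Set (Sym2 V) := {f | Theta G s(a,b) f} with hCdef
  have horient : ∀ x y, s(x,y) ∈ C →
      ((∀ w, G.dist w x < G.dist w y ↔ G.dist w a < G.dist w b) ∨
       (∀ w, G.dist w x < G.dist w y ↔ ¬(G.dist w a < G.dist w b))) := by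
    intro x y hmem
    obtain ⟨p, q, heq, hpq, hw⟩ := theta_transfer hmed hab hmem.2.2
    rcases Sym2.eq_iff.mp heq with ⟨rfl, rfl⟩ | ⟨rfl, rfl⟩
    · exact Or.inl hw
    · refine Or.inr (fun w => ?_)
      have h1 := hw w
      have h2 := adj_dist_ne hmed hpq w
      omega
  have hedge : ∀ x y, G.Adj x y → (s(x, y) ∈ C ↔
      ¬((G.dist x a < G.dist x b) ↔ (G.dist y a < G.dist y b))) := by
    intro x y hxy
    constructor
    · intro hmem
      have hxy1 : G.dist x y = 1 := adj_dist_one hxy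
      have hyx1 : G.dist y x = 1 := adj_dist_one hxy.symm
      have hxx : G.dist x x = 0 := by simp
      have hyy : G.dist y y = 0 := by simp
      rcases horient x y hmem with hO | hO
      · have o1 := hO x
        have o2 := hO y
        omega
      · have o1 := hO x
        have o2 := hO y
        omega
    · intro hne
      have hx := adj_dist_ne hmed hab x
      have hy := adj_dist_ne hmed hab y
      by_cases hPx : G.dist x a < G.dist x b
      · have hPy : G.dist y b < G.dist y a := by omega
        exact dj_theta hmed hab hxy hPx hPy
      · have hPy : G.dist y a < G.dist y b := by omega
        have hPx' : G.dist x b < G.dist x a := by omega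
        have : Theta G s(a,b) s(y,x) := dj_theta hmed hab hxy.symm hPy hPx'
        simpa [hCdef, Set.mem_setOf_eq, Sym2.eq_swap] using this
  have hR2 : ∀ x y, (G.deleteEdges C).Reachable x y →
      ((G.dist x a < G.dist x b) ↔ (G.dist y a < G.dist y b)) := by
    intro x y h
    obtain ⟨p⟩ := h
    induction p with
    | nil => exact Iff.rfl
    | @cons x z y hadj q ih =>
      rw [SimpleGraph.deleteEdges_adj] at hadj
      have hstep : (G.dist x a < G.dist x b) ↔ (G.dist z a < G.dist z b) := by
        by_contra hne
        exact hadj.2 ((hedge x z hadj.1).mpr hne)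
      exact hstep.trans ih
  have hR1 : ∀ n x y, G.dist x y = n →
      ((G.dist x a < G.dist x b) ↔ (G.dist y a < G.dist y b)) →
      (G.deleteEdges C).Reachable x y := by
    intro n
    induction n using Nat.strong_induction_on with
    | _ n ih =>
      intro x y hdist hPxy
      rcases Nat.eq_zero_or_pos n with rfl | hpos
      · have : x = y := hmed.1.dist_eq_zero_iff.mp hdist
        exact this ▸ SimpleGraph.Reachable.refl x
      · obtain ⟨z, hxz, hz⟩ := exists_step (x := x) (y := y) hmed.1 (by omega)
        have hPz : (G.dist x a < G.dist x b) ↔ (G.dist z a < G.dist z b) := by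
          by_contra hne
          have hmem : s(x, z) ∈ C := (hedge x z hxz).mpr hne
          have c1 := dist_comm' G y x
          have c2 := dist_comm' G y z
          rcases horient x z hmem with hO | hO
          · have o1 := hO x
            have o2 := hO y
            have hxx : G.dist x x = 0 := by simp
            have hxz1 : G.dist x z = 1 := adj_dist_one hxz
            omega
          · have o1 := hO x
            have o2 := hO y
            have hxx : G.dist x x = 0 := by simp
            have hxz1 : G.dist x z = 1 := adj_dist_one hxz
            omega
        have hnotC : s(x, z) ∉ C := by
          intro hmem
          exact ((hedge x z hxz).mp hmem) hPz
        have hadj' : (G.deleteEdges C).Adj x z := by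
          rw [SimpleGraph.deleteEdges_adj]
          exact ⟨hxz, hnotC⟩
        exact hadj'.reachable.trans (ih (n-1) (by omega) z y (by omega) (hPz.symm.trans hPxy))
  refine ⟨fun w => G.dist w a < G.dist w b, hedge, horient, fun x y => ?_⟩
  constructor
  · intro hS
    intro hP
    exact hS (hR1 _ x y rfl hP)
  · intro hne hR
    exact hne (hR2 x y hR)


end Side

section Signature
variable {G : SimpleGraph V}

lemma sep_irrefl {C : Set (Sym2 V)} (x : V) : ¬ Separates G C x x :=
  fun h => h (SimpleGraph.Reachable.refl x)

lemma sep_comm {C : Set (Sym2 V)} {x y : V} (h : Separates G C x y) : Separates G C y x :=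
  fun h' => h h'.symm

lemma sep_tri {C : Set (Sym2 V)} {x z : V} (y : V) (h : Separates G C x z) :
    Separates G C x y ∨ Separates G C y z := by
  by_contra hc
  push_neg at hc
  simp only [Separates, not_not] at hc
  exact h (hc.1.trans hc.2)

lemma sep_xor (hmed : MedianGraph G) {C : Set (Sym2 V)} (hC : ThetaClass G C) (x y z : V) :
    Separates G C x z ↔ ¬(Separates G C x y ↔ Separates G C y z) := by
  obtain ⟨P, -, -, hsep⟩ := class_side hmed hC
  rw [hsep, hsep, hsep]
  tauto

lemma mem_signature {C : Set (Sym2 V)} {x y : V} :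
    C ∈ signature G x y ↔ ThetaClass G C ∧ Separates G C x y := Iff.rfl

lemma signature_comm (x y : V) : signature G x y = signature G y x := by
  ext C
  exact ⟨fun h => ⟨h.1, sep_comm h.2⟩, fun h => ⟨h.1, sep_comm h.2⟩⟩

lemma signature_self (x : V) : signature G x x = ∅ := by
  ext C
  simp only [mem_signature, Set.mem_empty_iff_false, iff_false, not_and]
  exact fun _ => sep_irrefl x

variable [Finite V]

lemma dist_eq_ncard_signature (hmed : MedianGraph G) (x y : V) :
    G.dist x y = (signature G x y).ncard := by
  suffices H : ∀ n x y, G.dist x y = n → (signature G x y).ncard = n by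
    exact (H _ x y rfl).symm
  intro n
  induction n using Nat.strong_induction_on with
  | _ n ih =>
    intro x y hdist
    rcases Nat.eq_zero_or_pos n with rfl | hpos
    · have hxy : x = y := hmed.1.dist_eq_zero_iff.mp hdist
      rw [← hxy, signature_self, Set.ncard_empty]
    · obtain ⟨z, hxz, hz⟩ := exists_step (x := x) (y := y) hmed.1 (by omega)
      set C₀ : Set (Sym2 V) := {f | Theta G s(x,z) f} with hC₀def
      have hC₀ : ThetaClass G C₀ := ⟨s(x,z), hxz, rfl⟩
      have hmem0 : s(x,z) ∈ C₀ := theta_refl hxz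
      have harith1 : G.dist x x < G.dist x z := by
        rw [adj_dist_one hxz]
        simp
      have harith2 : ¬ (G.dist y x < G.dist y z) := by
        have c1 := dist_comm' G y x
        have c2 := dist_comm' G y z
        omega
      have harith3 : ¬ (G.dist z x < G.dist z z) := by
        have h0 : G.dist z z = 0 := SimpleGraph.dist_self
        omega
      -- C₀ separates x y but not z y
      obtain ⟨P, hedge, horient, hsep⟩ := class_side hmed hC₀
      have hC₀xy : Separates G C₀ x y := by
        rw [hsep]
        rcases horient x z hmem0 with hO | hO
        · have o1 := hO x; have o2 := hO y; tauto
        · have o1 := hO x; have o2 := hO y; tauto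
      have hC₀zy : ¬ Separates G C₀ z y := by
        rw [hsep]
        rcases horient x z hmem0 with hO | hO
        · have o1 := hO z; have o2 := hO y; tauto
        · have o1 := hO z; have o2 := hO y; tauto
      have key : ∀ C, ThetaClass G C → C ≠ C₀ → (Separates G C x y ↔ Separates G C z y) := by
        intro C hC hne
        obtain ⟨Q, hedgeQ, -, hsepQ⟩ := class_side hmed hC
        have hQxz : Q x ↔ Q z := by
          by_contra hq
          exact hne (class_eq_of_mem hC hC₀ ((hedgeQ x z hxz).mpr hq) hmem0)
        rw [hsepQ, hsepQ]
        tauto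
      have hA : signature G x y = insert C₀ (signature G z y) := by
        ext C
        simp only [mem_signature, Set.mem_insert_iff]
        constructor
        · rintro ⟨hC, hsepC⟩
          by_cases hne : C = C₀
          · exact Or.inl hne
          · exact Or.inr ⟨hC, (key C hC hne).mp hsepC⟩
        · rintro (rfl | ⟨hC, hsepC⟩)
          · exact ⟨hC₀, hC₀xy⟩
          · by_cases hne : C = C₀
            · subst hne; exact absurd hsepC hC₀zy
            · exact ⟨hC, (key C hC hne).mpr hsepC⟩
      have hB : C₀ ∉ signature G z y := fun h => hC₀zy h.2
      rw [hA, Set.ncard_insert_of_notMem hB]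
      have := ih (n-1) (by omega) z y (by omega)
      omega

omit [Finite V] in
lemma signature_subset_union (hmed : MedianGraph G) (x y z : V) :
    signature G x z ⊆ signature G x y ∪ signature G y z := by
  intro C hC
  rcases sep_tri y hC.2 with h | h
  · exact Or.inl ⟨hC.1, h⟩
  · exact Or.inr ⟨hC.1, h⟩

lemma interval_iff_disjoint (hmed : MedianGraph G) (x y z : V) :
    z ∈ interval G x y ↔ Disjoint (signature G x z) (signature G z y) := by
  have hsub := signature_subset_union hmed x z y
  have e1 := dist_eq_ncard_signature hmed x z
  have e2 := dist_eq_ncard_signature hmed z y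
  have e3 := dist_eq_ncard_signature hmed x y
  constructor
  · intro hz
    have hmem : G.dist x z + G.dist z y = G.dist x y := hz
    have h1 : (signature G x y).ncard ≤ ((signature G x z) ∪ (signature G z y)).ncard :=
      Set.ncard_le_ncard hsub
    have h2 := Set.ncard_union_add_ncard_inter (signature G x z) (signature G z y)
    rw [Set.disjoint_iff_inter_eq_empty, ← Set.ncard_eq_zero]
    omega
  · intro hdisj
    have hsub2 : signature G x z ∪ signature G z y ⊆ signature G x y := by
      rintro C (⟨hC, hsepC⟩ | ⟨hC, hsepC⟩)
      · have hnot : ¬ Separates G C z y :=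
          fun h => (Set.disjoint_left.mp hdisj ⟨hC, hsepC⟩) ⟨hC, h⟩
        refine ⟨hC, ?_⟩
        rw [sep_xor hmed hC x z y]
        tauto
      · have hnot : ¬ Separates G C x z :=
          fun h => (Set.disjoint_left.mp hdisj ⟨hC, h⟩) ⟨hC, hsepC⟩
        refine ⟨hC, ?_⟩
        rw [sep_xor hmed hC x z y]
        tauto
    have heq : signature G x z ∪ signature G z y = signature G x y :=
      Set.Subset.antisymm hsub2 hsub
    show G.dist x z + G.dist z y = G.dist x y
    rw [e1, e2, e3, ← heq, Set.ncard_union_eq hdisj]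
end Signature

section Slide
variable {G : SimpleGraph V}

lemma class_theta0_closed {C : Set (Sym2 V)} (hC : ThetaClass G C) {e f : Sym2 V}
    (he : e ∈ C) (hef : Theta0 G e f) (hf : f ∈ G.edgeSet) : f ∈ C := by
  obtain ⟨e₀, he₀, rfl⟩ := hC
  exact ⟨he.1, hf, he.2.2.tail hef⟩

lemma orth_symm {C₁ C₂ : Set (Sym2 V)} (h : Orthogonal G C₁ C₂) : Orthogonal G C₂ C₁ := by
  obtain ⟨u, v, x, y, ⟨huv, hxy, hux, hvy, huy, hvx⟩, h1, h2, h3, h4⟩ := h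
  exact ⟨u, x, v, y, ⟨hux, hvy, huv, hxy, huy, Ne.symm hvx⟩, h3, h4, h1, h2⟩

/-- If `w` is on the opposite side from `x` of the cut through edge `xa`,
then `w` is strictly closer to `a`. -/
lemma opp_side_dist (hmed : MedianGraph G) {P : V → Prop} {x a : V} (hxa : G.Adj x a)
    (hO : (∀ w, G.dist w x < G.dist w a ↔ P w) ∨ (∀ w, G.dist w x < G.dist w a ↔ ¬ P w))
    {w : V} (hPw : ¬(P w ↔ P x)) : G.dist w a < G.dist w x := by
  have hne' := adj_dist_ne hmed hxa w
  have hxx : G.dist x x = 0 := SimpleGraph.dist_self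
  have hxa1 : G.dist x a = 1 := adj_dist_one hxa
  have htrue : G.dist x x < G.dist x a := by omega
  rcases hO with hO | hO
  · have hPx : P x := (hO x).mp htrue
    have hnw : ¬ P w := fun h => hPw (iff_of_true h hPx)
    have : ¬ (G.dist w x < G.dist w a) := fun h => hnw ((hO w).mp h)
    omega
  · have hPx : ¬ P x := (hO x).mp htrue
    have hw : P w := by
      by_contra hw
      exact hPw (iff_of_false hw hPx)
    have : ¬ (G.dist w x < G.dist w a) := fun h => ((hO w).mp h) hw
    omega

/-- If `w` is on the same side as `x` of the cut through edge `xa`,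
then `w` is strictly closer to `x`. -/
lemma same_side_dist (hmed : MedianGraph G) {P : V → Prop} {x a : V} (hxa : G.Adj x a)
    (hO : (∀ w, G.dist w x < G.dist w a ↔ P w) ∨ (∀ w, G.dist w x < G.dist w a ↔ ¬ P w))
    {w : V} (hPw : P w ↔ P x) : G.dist w x < G.dist w a := by
  have hxx : G.dist x x = 0 := SimpleGraph.dist_self
  have hxa1 : G.dist x a = 1 := adj_dist_one hxa
  have htrue : G.dist x x < G.dist x a := by omega
  rcases hO with hO | hO
  · exact (hO w).mpr (hPw.mpr ((hO x).mp htrue))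
  · exact (hO w).mpr (fun hw => ((hO x).mp htrue) (hPw.mp hw))

/-- Slide an edge of the class `C` across an edge of an orthogonal class `C'`. -/
lemma slide (hmed : MedianGraph G) {C C' : Set (Sym2 V)} (hC : ThetaClass G C)
    (hC' : ThetaClass G C') (hne : C ≠ C') (horth : Orthogonal G C C')
    {x a b : V} (hxa : G.Adj x a) (haC : s(x, a) ∈ C) (hxb : G.Adj x b)
    (hbC' : s(x, b) ∈ C') : ∃ c, G.Adj b c ∧ s(b, c) ∈ C := by
  obtain ⟨P, hedgeP, horientP, -⟩ := class_side hmed hC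
  obtain ⟨Q, hedgeQ, horientQ, -⟩ := class_side hmed hC'
  obtain ⟨p, q, r, s', hsq, h1, h2, h3, h4⟩ := horth
  obtain ⟨hpq, hrs, hpr, hqs, hps', hqr⟩ := hsq
  have Ppq : ¬(P p ↔ P q) := (hedgeP p q hpq).mp h1
  have Prs : ¬(P r ↔ P s') := (hedgeP r s' hrs).mp h2
  have Ppr : P p ↔ P r := by
    by_contra hcon
    exact hne (class_eq_of_mem hC hC' ((hedgeP p r hpr).mpr hcon) h3)
  have Pqs : P q ↔ P s' := by
    by_contra hcon
    exact hne (class_eq_of_mem hC hC' ((hedgeP q s' hqs).mpr hcon) h4)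
  have Qpr : ¬(Q p ↔ Q r) := (hedgeQ p r hpr).mp h3
  have Qqs : ¬(Q q ↔ Q s') := (hedgeQ q s' hqs).mp h4
  have Qpq : Q p ↔ Q q := by
    by_contra hcon
    exact hne (class_eq_of_mem hC hC' h1 ((hedgeQ p q hpq).mpr hcon))
  have Qrs : Q r ↔ Q s' := by
    by_contra hcon
    exact hne (class_eq_of_mem hC hC' h2 ((hedgeQ r s' hrs).mpr hcon))
  -- select the corner in the opposite quadrant from x
  have hsel : ∃ w, ¬(P w ↔ P x) ∧ ¬(Q w ↔ Q x) := by
    by_cases e1 : P p ↔ P x <;> by_cases e2 : Q p ↔ Q x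
    · exact ⟨s', fun h => Ppq (e1.trans (Pqs.trans h).symm),
        fun h => Qpr (e2.trans (Qrs.trans h).symm)⟩
    · exact ⟨q, fun h => Ppq (e1.trans h.symm), fun h => e2 (Qpq.trans h)⟩
    · exact ⟨r, fun h => e1 (Ppr.trans h), fun h => Qpr (e2.trans h.symm)⟩
    · exact ⟨p, e1, e2⟩
  obtain ⟨w, hPw, hQw⟩ := hsel
  -- distance facts
  have hwa : G.dist w a < G.dist w x :=
    opp_side_dist hmed hxa (horientP x a haC) hPw
  have hwb : G.dist w b < G.dist w x :=
    opp_side_dist hmed hxb (horientQ x b hbC') hQw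
  have hwxa : G.dist w x ≤ G.dist w a + 1 := by
    have := hmed.1.dist_triangle (u := w) (v := a) (w := x)
    rw [adj_dist_one hxa.symm] at this
    omega
  have hwxb : G.dist w x ≤ G.dist w b + 1 := by
    have := hmed.1.dist_triangle (u := w) (v := b) (w := x)
    rw [adj_dist_one hxb.symm] at this
    omega
  have hab : a ≠ b := by
    rintro rfl
    exact hne (class_eq_of_mem hC hC' haC hbC')
  have hab2 : G.dist a b = 2 := common_nbr_dist_two hmed hxa.symm hxb.symm hab
  obtain ⟨m, ⟨m1, m2, m3⟩, -⟩ := hmed.2 a b w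
  simp only [interval, Set.mem_setOf_eq] at m1 m2 m3
  rw [hab2] at m1
  have ca := dist_comm' G a w
  have cb := dist_comm' G b w
  have hma : m ≠ a := by
    rintro rfl
    have c2 := dist_comm' G m b
    omega
  have hmb : m ≠ b := by
    rintro rfl
    have c2 := dist_comm' G a m
    omega
  have hda : G.dist a m ≠ 0 := fun h => hma (hmed.1.dist_eq_zero_iff.mp h).symm
  have hdb : G.dist m b ≠ 0 := fun h => hmb (hmed.1.dist_eq_zero_iff.mp h)
  have ham : G.Adj a m := dist_one_adj (by omega)
  have hmbadj : G.Adj m b := dist_one_adj (by omega)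
  have hmx : m ≠ x := by
    rintro rfl
    have c2 := dist_comm' G m w
    have hd : G.dist m b = 1 := by omega
    omega
  have hsq2 : IsSquare G x a b m :=
    ⟨hxa, hmbadj.symm, hxb, ham, hmx.symm, hab⟩
  refine ⟨m, hmbadj.symm, ?_⟩
  exact class_theta0_closed hC haC ⟨x, a, b, m, hsq2, rfl, rfl⟩ hmbadj.symm
end Slide

section Ladder
variable {G : SimpleGraph V}

/-- If the class of edge `uw` separates `u` from `v`, then `w` is one step closer to `v`. -/
lemma sep_edge_dist (hmed : MedianGraph G) {C : Set (Sym2 V)} (hC : ThetaClass G C)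
    {u w v : V} (huw : G.Adj u w) (hmem : s(u, w) ∈ C) (hsep : Separates G C u v) :
    G.dist v w + 1 = G.dist v u := by
  obtain ⟨P, hedge, horient, hsepP⟩ := class_side hmed hC
  have hPuv : ¬(P u ↔ P v) := (hsepP u v).mp hsep
  have hlt : G.dist v w < G.dist v u :=
    opp_side_dist hmed huw (horient u w hmem) (fun h => hPuv h.symm)
  have htr : G.dist v u ≤ G.dist v w + G.dist w u := hmed.1.dist_triangle
  rw [adj_dist_one huw.symm] at htr
  omega

/-- Two distinct classes of the ladder set of `(u,v)` are orthogonal. -/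
lemma orth_of_ladder (hmed : MedianGraph G) {C C' : Set (Sym2 V)} (hC : ThetaClass G C)
    (hC' : ThetaClass G C') (hne : C ≠ C') {u v w w' : V}
    (huw : G.Adj u w) (hwC : s(u, w) ∈ C) (huw' : G.Adj u w') (hw'C' : s(u, w') ∈ C')
    (hsC : Separates G C u v) (hsC' : Separates G C' u v) : Orthogonal G C C' := by
  have hvw : G.dist v w + 1 = G.dist v u := sep_edge_dist hmed hC huw hwC hsC
  have hvw' : G.dist v w' + 1 = G.dist v u := sep_edge_dist hmed hC' huw' hw'C' hsC'
  have hww' : w ≠ w' := by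
    rintro rfl
    exact hne (class_eq_of_mem hC hC' hwC hw'C')
  have hw2 : G.dist w w' = 2 := common_nbr_dist_two hmed huw.symm huw'.symm hww'
  obtain ⟨m, ⟨m1, m2, m3⟩, -⟩ := hmed.2 w w' v
  simp only [interval, Set.mem_setOf_eq] at m1 m2 m3
  rw [hw2] at m1
  have cw := dist_comm' G w' v
  have cw2 := dist_comm' G w v
  have h0 : G.dist m m = 0 := SimpleGraph.dist_self
  have hmw : m ≠ w := by
    rintro rfl
    have c2 := dist_comm' G m w'
    omega
  have hmw' : m ≠ w' := by
    rintro rfl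
    have c2 := dist_comm' G w m
    omega
  have hd1 : G.dist w m ≠ 0 := fun h => hmw (hmed.1.dist_eq_zero_iff.mp h).symm
  have hd2 : G.dist m w' ≠ 0 := fun h => hmw' (hmed.1.dist_eq_zero_iff.mp h)
  have hwm : G.Adj w m := dist_one_adj (by omega)
  have hmw'adj : G.Adj m w' := dist_one_adj (by omega)
  have hmu : m ≠ u := by
    rintro rfl
    have c3 := dist_comm' G m v
    omega
  have hsq1 : IsSquare G u w w' m :=
    ⟨huw, hmw'adj.symm, huw', hwm, hmu.symm, hww'⟩
  have hsq2 : IsSquare G u w' w m :=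
    ⟨huw', hwm, huw, hmw'adj.symm, hmu.symm, hww'.symm⟩
  have hmem1 : s(w', m) ∈ C :=
    class_theta0_closed hC hwC ⟨u, w, w', m, hsq1, rfl, rfl⟩ hmw'adj.symm
  have hmem2 : s(w, m) ∈ C' :=
    class_theta0_closed hC' hw'C' ⟨u, w', w, m, hsq2, rfl, rfl⟩ hwm
  exact ⟨u, w, w', m, hsq1, hwC, hmem1, hw'C', hmem2⟩
end Ladder

section Cube
variable {G : SimpleGraph V} {k : ℕ}

/-- symmDiff facts on Finsets. -/
lemma symmDiff_flip_self (A : Finset (Fin k)) (i : Fin k) :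
    symmDiff A (symmDiff A {i}) = {i} :=
  symmDiff_symmDiff_cancel_left A {i}

lemma symmDiff_card_zero {A B : Finset (Fin k)} (h : (symmDiff A B).card = 0) : A = B := by
  have h2 : symmDiff A B = ∅ := Finset.card_eq_zero.mp h
  have h3 : symmDiff A B = ⊥ := by rw [h2]; rfl
  exact symmDiff_eq_bot.mp h3

lemma symmDiff_erase {A B : Finset (Fin k)} {j : Fin k} (hj : j ∈ symmDiff A B) :
    symmDiff (symmDiff A {j}) B = (symmDiff A B).erase j := by
  ext t
  simp only [Finset.mem_symmDiff, Finset.mem_erase, Finset.mem_singleton] at *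
  by_cases ht : t = j <;> subst_eqs <;> tauto

variable (ψ : Finset (Fin k) → V) (hinj : Function.Injective ψ)
  (hadj : ∀ A B : Finset (Fin k), (symmDiff A B).card = 1 → G.Adj (ψ A) (ψ B))

include hadj in
lemma cube_adj_flip (A : Finset (Fin k)) (i : Fin k) : G.Adj (ψ A) (ψ (symmDiff A {i})) :=
  hadj _ _ (by rw [symmDiff_flip_self]; simp)

include hinj hadj in
lemma cube_flip_theta (i : Fin k) (A B : Finset (Fin k)) :
    Theta G s(ψ A, ψ (symmDiff A {i})) s(ψ B, ψ (symmDiff B {i})) := by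
  suffices H : ∀ n A B, (symmDiff A B).card = n →
      Theta G s(ψ A, ψ (symmDiff A {i})) s(ψ B, ψ (symmDiff B {i})) from H _ A B rfl
  intro n
  induction n using Nat.strong_induction_on with
  | _ n ih =>
    intro A B hcard
    rcases Nat.eq_zero_or_pos n with rfl | hpos
    · have : A = B := symmDiff_card_zero hcard
      subst this
      exact theta_refl (cube_adj_flip ψ hadj A i)
    · have hne : symmDiff A B ≠ ∅ := by
        intro h
        rw [h] at hcard
        simp at hcard
        omega
      by_cases hii : symmDiff A B = {i}
      · -- B = A ∆ {i}, the two edges coincide up to swap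
        have hB : B = symmDiff A {i} := by
          have := symmDiff_symmDiff_cancel_left A B
          rw [hii] at this
          exact this.symm
        have hB2 : symmDiff B {i} = A := by
          rw [hB, symmDiff_assoc]
          simp
        have heq : s(ψ B, ψ (symmDiff B {i})) = s(ψ A, ψ (symmDiff A {i})) := by
          rw [hB2, hB]
          exact Sym2.eq_swap
        rw [heq]
        exact theta_refl (cube_adj_flip ψ hadj A i)
      · -- pick j ≠ i in the symmetric difference
        have hex : ∃ j ∈ symmDiff A B, j ≠ i := by
          by_contra hcon
          push_neg at hcon
          apply hii
          apply Finset.eq_singleton_iff_nonempty_unique_mem.mpr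
          exact ⟨Finset.nonempty_iff_ne_empty.mpr hne, hcon⟩
        obtain ⟨j, hj, hji⟩ := hex
        set A' := symmDiff A {j} with hA'
        -- square: ψ A, ψ (A∆{i}), ψ A', ψ (A'∆{i})
        have hsq : IsSquare G (ψ A) (ψ (symmDiff A {i})) (ψ A') (ψ (symmDiff A' {i})) := by
          refine ⟨cube_adj_flip ψ hadj A i, cube_adj_flip ψ hadj A' i,
            cube_adj_flip ψ hadj A j, ?_, ?_, ?_⟩
          · have heq : symmDiff A' {i} = symmDiff (symmDiff A {i}) {j} := by
              rw [hA']
              exact symmDiff_right_comm A {j} {i}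
            rw [heq]
            exact cube_adj_flip ψ hadj (symmDiff A {i}) j
          · intro h
            have h2 := hinj h
            rw [hA'] at h2
            have hmm : j ∈ A ↔ j ∈ symmDiff (symmDiff A {j}) {i} := h2 ▸ Iff.rfl
            simp [Finset.mem_symmDiff, hji] at hmm
          · intro h
            have h2 := hinj h
            have hmm : i ∈ symmDiff A {i} ↔ i ∈ symmDiff A {j} := h2 ▸ Iff.rfl
            have hij : i ≠ j := fun hh => hji hh.symm
            simp [Finset.mem_symmDiff, hij] at hmm
        have step : Theta0 G s(ψ A, ψ (symmDiff A {i})) s(ψ A', ψ (symmDiff A' {i})) :=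
          ⟨_, _, _, _, hsq, rfl, rfl⟩
        have hcard' : (symmDiff A' B).card = n - 1 := by
          rw [hA', symmDiff_erase hj, Finset.card_erase_of_mem hj, hcard]
        have hrest : Theta G s(ψ A', ψ (symmDiff A' {i})) s(ψ B, ψ (symmDiff B {i})) :=
          ih (n-1) (by omega) A' B hcard'
        refine theta_trans (theta_tail (theta_refl ?_) step ?_) hrest
        · exact cube_adj_flip ψ hadj A i
        · exact cube_adj_flip ψ hadj A' i

variable (Ci : Fin k → Set (Sym2 V))
  (hCitheta : ∀ i, ThetaClass G (Ci i))
  (hCimem : ∀ i (A : Finset (Fin k)), s(ψ A, ψ (symmDiff A {i})) ∈ Ci i)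
  (hCiinj : Function.Injective Ci)

omit hinj in
include hadj hCitheta hCimem hCiinj in
lemma cube_sep_coord (hmed : MedianGraph G) (i : Fin k) (A B : Finset (Fin k)) :
    Separates G (Ci i) (ψ A) (ψ B) ↔ i ∈ symmDiff A B := by
  suffices H : ∀ n A B, (symmDiff A B).card = n →
      (Separates G (Ci i) (ψ A) (ψ B) ↔ i ∈ symmDiff A B) from H _ A B rfl
  intro n
  induction n using Nat.strong_induction_on with
  | _ n ih =>
    intro A B hcard
    rcases Nat.eq_zero_or_pos n with rfl | hpos
    · have : A = B := symmDiff_card_zero hcard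
      subst this
      simp only [symmDiff_self]
      constructor
      · intro h
        exact absurd h (sep_irrefl _)
      · intro h
        simp at h
    · have hne : (symmDiff A B).Nonempty := by
        rw [← Finset.card_pos, hcard]
        omega
      obtain ⟨j, hj⟩ := hne
      set A' := symmDiff A {j} with hA'
      have hedgej : s(ψ A, ψ A') ∈ Ci j := hCimem j A
      have hsep_edge : Separates G (Ci i) (ψ A) (ψ A') ↔ i = j := by
        obtain ⟨P, hedgeP, -, hsepP⟩ := class_side hmed (hCitheta i)
        constructor
        · intro hsep
          have hcross : ¬ (P (ψ A) ↔ P (ψ A')) := (hsepP _ _).mp hsep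
          have hmem : s(ψ A, ψ A') ∈ Ci i :=
            (hedgeP _ _ (cube_adj_flip ψ hadj A j)).mpr hcross
          exact hCiinj (class_eq_of_mem (hCitheta i) (hCitheta j) hmem hedgej)
        · rintro rfl
          have hmem : s(ψ A, ψ A') ∈ Ci i := by
            rw [hA']
            exact hCimem i A
          have hadj2 : G.Adj (ψ A) (ψ A') := by
            rw [hA']
            exact cube_adj_flip ψ hadj A i
          exact (hsepP _ _).mpr ((hedgeP _ _ hadj2).mp hmem)
      have hcard' : (symmDiff A' B).card = n - 1 := by
        rw [hA', symmDiff_erase hj, Finset.card_erase_of_mem hj, hcard]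
      have hIH := ih (n-1) (by omega) A' B hcard'
      rw [sep_xor hmed (hCitheta i) (ψ A) (ψ A') (ψ B), hsep_edge, hIH, hA',
        symmDiff_erase hj]
      by_cases hij : i = j
      · subst hij
        simp [hj]
      · simp only [Finset.mem_erase, ne_eq, hij, not_false_eq_true, true_and]
        tauto

omit hinj in
include hadj hCitheta hCimem in
lemma cube_not_sep (hmed : MedianGraph G) {C : Set (Sym2 V)} (hC : ThetaClass G C)
    (hne : ∀ i, C ≠ Ci i) (A B : Finset (Fin k)) : ¬ Separates G C (ψ A) (ψ B) := by
  suffices H : ∀ n A B, (symmDiff A B).card = n → ¬ Separates G C (ψ A) (ψ B) from H _ A B rfl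
  intro n
  induction n using Nat.strong_induction_on with
  | _ n ih =>
    intro A B hcard
    rcases Nat.eq_zero_or_pos n with rfl | hpos
    · have : A = B := symmDiff_card_zero hcard
      subst this
      exact sep_irrefl _
    · have hne' : (symmDiff A B).Nonempty := by
        rw [← Finset.card_pos, hcard]
        omega
      obtain ⟨j, hj⟩ := hne'
      set A' := symmDiff A {j} with hA'
      have hnsep : ¬ Separates G C (ψ A) (ψ A') := by
        intro hsep
        obtain ⟨P, hedgeP, -, hsepP⟩ := class_side hmed hC
        have hmem : s(ψ A, ψ A') ∈ C :=
          (hedgeP _ _ (cube_adj_flip ψ hadj A j)).mpr ((hsepP _ _).mp hsep)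
        exact hne j (class_eq_of_mem hC (hCitheta j) hmem (hCimem j A))
      have hcard' : (symmDiff A' B).card = n - 1 := by
        rw [hA', symmDiff_erase hj, Finset.card_erase_of_mem hj, hcard]
      have hIH := ih (n-1) (by omega) A' B hcard'
      rw [sep_xor hmed hC (ψ A) (ψ A') (ψ B)]
      tauto

omit hinj in
include hadj hCitheta hCimem in
lemma cube_slide_iter (hmed : MedianGraph G) {C : Set (Sym2 V)} (hC : ThetaClass G C)
    (hne : ∀ i, C ≠ Ci i) (horth : ∀ i, Orthogonal G C (Ci i)) (A B : Finset (Fin k))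
    (hstart : ∃ c, G.Adj (ψ A) c ∧ s(ψ A, c) ∈ C) :
    ∃ c, G.Adj (ψ B) c ∧ s(ψ B, c) ∈ C := by
  suffices H : ∀ n A B, (symmDiff A B).card = n → (∃ c, G.Adj (ψ A) c ∧ s(ψ A, c) ∈ C) →
      (∃ c, G.Adj (ψ B) c ∧ s(ψ B, c) ∈ C) from H _ A B rfl hstart
  intro n
  induction n using Nat.strong_induction_on with
  | _ n ih =>
    intro A B hcard hstart
    rcases Nat.eq_zero_or_pos n with rfl | hpos
    · have : A = B := symmDiff_card_zero hcard
      subst this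
      exact hstart
    · have hne' : (symmDiff A B).Nonempty := by
        rw [← Finset.card_pos, hcard]
        omega
      obtain ⟨j, hj⟩ := hne'
      set A' := symmDiff A {j} with hA'
      obtain ⟨c, hc, hcC⟩ := hstart
      have hnext : ∃ c, G.Adj (ψ A') c ∧ s(ψ A', c) ∈ C :=
        slide hmed hC (hCitheta j) (hne j) (horth j) hc hcC
          (cube_adj_flip ψ hadj A j) (hCimem j A)
      have hcard' : (symmDiff A' B).card = n - 1 := by
        rw [hA', symmDiff_erase hj, Finset.card_erase_of_mem hj, hcard]
      exact ih (n-1) (by omega) A' B hcard' hnext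
end Cube


/-- In a median graph with basepoint `v₀`, let `L` be a POF
outgoing from `u`, `Q` (with vertex set `S`) the induced hypercube with basis
`u` and Θ-classes `L`, and `u⁺` its anti-basis. A vertex `v ≠ u⁺` satisfies
`u ∈ I(v₀,v)` and `L_{u,v} = L` iff `u⁺ ∈ I(v₀,v)` and no class of
`L_{u⁺,v}` extends `L` to a POF. -/
theorem pushing_label {V : Type*} [Fintype V] (G : SimpleGraph V)
    (hmed : MedianGraph G) (v₀ u : V)
    (L : Set (Set (Sym2 V))) (hL : OutgoingPOF G v₀ u L)
    (S : Set V) (hS : IsInducedCube G S) (hbasis : IsBasis G v₀ S u)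
    (hclasses : cubeClasses G S = L)
    (uplus : V) (hanti : IsAntiBasis G v₀ S uplus)
    (v : V) (hv : v ≠ uplus) :
    (u ∈ interval G v₀ v ∧ ladder G u v = L) ↔
      (uplus ∈ interval G v₀ v ∧
       ∀ C ∈ ladder G uplus v, ¬ IsPOF G (L ∪ {C})) := by
  classical
  obtain ⟨k, ⟨φ⟩⟩ := hS
  set ψ : Finset (Fin k) → V := fun A => ((φ.symm A : S) : V) with hψdef
  have hψS : ∀ A, (ψ A) ∈ S := fun A => (φ.symm A).2
  have hψinj : Function.Injective ψ := by
    intro A B h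
    exact φ.symm.injective (Subtype.coe_injective h)
  have hψadj : ∀ A B : Finset (Fin k), (symmDiff A B).card = 1 → G.Adj (ψ A) (ψ B) := by
    intro A B h
    have h1 : (cubeGraph k).Adj A B := h
    exact φ.symm.map_rel_iff.mpr h1
  have huS : u ∈ S := hbasis.1
  have hupS : uplus ∈ S := hanti.1
  set U₀ : Finset (Fin k) := φ ⟨u, huS⟩ with hU₀def
  set U₁ : Finset (Fin k) := φ ⟨uplus, hupS⟩ with hU₁def
  have hU₀ : ψ U₀ = u := by
    show ((φ.symm (φ ⟨u, huS⟩) : S) : V) = u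
    rw [φ.symm_apply_apply]
  have hU₁ : ψ U₁ = uplus := by
    show ((φ.symm (φ ⟨uplus, hupS⟩) : S) : V) = uplus
    rw [φ.symm_apply_apply]
  set Ci : Fin k → Set (Sym2 V) :=
    fun i => {f | Theta G s(ψ U₀, ψ (symmDiff U₀ {i})) f} with hCidef
  have hCitheta : ∀ i, ThetaClass G (Ci i) :=
    fun i => ⟨s(ψ U₀, ψ (symmDiff U₀ {i})),
      (SimpleGraph.mem_edgeSet G).mpr (cube_adj_flip ψ hψadj U₀ i), rfl⟩
  have hCimem : ∀ i (A : Finset (Fin k)), s(ψ A, ψ (symmDiff A {i})) ∈ Ci i :=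
    fun i A => cube_flip_theta ψ hψinj hψadj i U₀ A
  have hEdgeU : ∀ i, G.Adj u (ψ (symmDiff U₀ {i})) := by
    intro i
    rw [← hU₀]
    exact cube_adj_flip ψ hψadj U₀ i
  have hMemU : ∀ i, s(u, ψ (symmDiff U₀ {i})) ∈ Ci i := by
    intro i
    rw [← hU₀]
    exact hCimem i U₀
  have hCiinj : Function.Injective Ci := by
    intro i j hij
    obtain ⟨P, hedgeP, horientP, hsepP⟩ := class_side hmed (hCitheta i)
    have hmemj : s(ψ U₀, ψ (symmDiff U₀ {j})) ∈ Ci i := by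
      rw [hij]
      exact hCimem j U₀
    have hcross : ¬(P (ψ U₀) ↔ P (ψ (symmDiff U₀ {j}))) :=
      (hedgeP _ _ (cube_adj_flip ψ hψadj U₀ j)).mp hmemj
    have hlt : G.dist (ψ (symmDiff U₀ {j})) (ψ (symmDiff U₀ {i})) <
        G.dist (ψ (symmDiff U₀ {j})) (ψ U₀) :=
      opp_side_dist hmed (cube_adj_flip ψ hψadj U₀ i) (horientP _ _ (hCimem i U₀))
        (fun h => hcross h.symm)
    have h1 : G.dist (ψ (symmDiff U₀ {j})) (ψ U₀) = 1 :=
      adj_dist_one (cube_adj_flip ψ hψadj U₀ j).symm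
    have h0 : G.dist (ψ (symmDiff U₀ {j})) (ψ (symmDiff U₀ {i})) = 0 := by omega
    have heq := hψinj (hmed.1.dist_eq_zero_iff.mp h0)
    have heq2 : ({j} : Finset (Fin k)) = {i} := by
      have := congrArg (fun X => symmDiff U₀ X) (rfl : symmDiff U₀ {j} = symmDiff U₀ {j})
      have h3 : symmDiff U₀ (symmDiff U₀ (symmDiff U₀ {j})) = symmDiff U₀ (symmDiff U₀ (symmDiff U₀ {i})) := by
        rw [heq]
      simpa [symmDiff_symmDiff_cancel_left] using h3
    exact (Finset.singleton_injective heq2).symm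
  have F_sep_coord := cube_sep_coord ψ hψadj Ci hCitheta hCimem hCiinj hmed
  have F_not_sep : ∀ (C : Set (Sym2 V)), ThetaClass G C → (∀ i, C ≠ Ci i) →
      ∀ A B, ¬ Separates G C (ψ A) (ψ B) :=
    fun C hC hne A B => cube_not_sep ψ hψadj Ci hCitheta hCimem hmed hC hne A B
  have F_slide : ∀ (C : Set (Sym2 V)), ThetaClass G C → (∀ i, C ≠ Ci i) →
      (∀ i, Orthogonal G C (Ci i)) → ∀ A B, (∃ c, G.Adj (ψ A) c ∧ s(ψ A, c) ∈ C) →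
      ∃ c, G.Adj (ψ B) c ∧ s(ψ B, c) ∈ C :=
    fun C hC hne horth A B hst =>
      cube_slide_iter ψ hψadj Ci hCitheta hCimem hmed hC hne horth A B hst
  -- L is the range of the coordinate classes
  have hrange : cubeClasses G S = Set.range Ci := by
    ext C
    constructor
    · rintro ⟨hCt, x, hxS, y, hyS, hxy, hxyC⟩
      have hindadj : (G.induce S).Adj ⟨x, hxS⟩ ⟨y, hyS⟩ := hxy
      have hadjc : (cubeGraph k).Adj (φ ⟨x, hxS⟩) (φ ⟨y, hyS⟩) := φ.map_rel_iff.mpr hindadj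
      have hcard : (symmDiff (φ ⟨x, hxS⟩) (φ ⟨y, hyS⟩)).card = 1 := hadjc
      obtain ⟨i, hi⟩ := Finset.card_eq_one.mp hcard
      have hBA : (φ ⟨y, hyS⟩ : Finset (Fin k)) = symmDiff (φ ⟨x, hxS⟩) {i} := by
        have hcan := symmDiff_symmDiff_cancel_left (φ ⟨x, hxS⟩ : Finset (Fin k)) (φ ⟨y, hyS⟩)
        rw [hi] at hcan
        exact hcan.symm
      have hAx : ψ (φ ⟨x, hxS⟩) = x := by
        show ((φ.symm (φ ⟨x, hxS⟩) : S) : V) = x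
        rw [φ.symm_apply_apply]
      have hBy : ψ (φ ⟨y, hyS⟩) = y := by
        show ((φ.symm (φ ⟨y, hyS⟩) : S) : V) = y
        rw [φ.symm_apply_apply]
      have hmem : s(x, y) ∈ Ci i := by
        rw [← hAx, ← hBy, hBA]
        exact hCimem i _
      exact ⟨i, class_eq_of_mem (hCitheta i) hCt hmem hxyC⟩
    · rintro ⟨i, rfl⟩
      exact ⟨hCitheta i, ψ U₀, hψS U₀, ψ (symmDiff U₀ {i}), hψS _,
        cube_adj_flip ψ hψadj U₀ i, hCimem i U₀⟩
  have hLr : L = Set.range Ci := by rw [← hclasses, hrange]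
  -- the basepoint and u are on the same side of each coordinate class
  have hnsv₀u : ∀ i, ¬ Separates G (Ci i) v₀ u := by
    intro i hsep
    obtain ⟨P, hedgeP, horientP, hsepP⟩ := class_side hmed (hCitheta i)
    have hcr := (hsepP v₀ u).mp hsep
    have h0 : G.dist u u = 0 := SimpleGraph.dist_self
    have h1 : G.dist u (ψ (symmDiff U₀ {i})) = 1 := adj_dist_one (hEdgeU i)
    have hdu : G.dist u u < G.dist u (ψ (symmDiff U₀ {i})) := by omega
    have hdv₀ : G.dist v₀ u < G.dist v₀ (ψ (symmDiff U₀ {i})) :=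
      hbasis.2 _ (hψS _) (hEdgeU i)
    have horΘ := horientP u _ (hMemU i)
    rcases horΘ with hO | hO
    · exact hcr (iff_of_true ((hO v₀).mp hdv₀) ((hO u).mp hdu))
    · exact hcr (iff_of_false ((hO v₀).mp hdv₀) ((hO u).mp hdu))
  -- u and uplus are antipodal in the cube
  have hΔ : symmDiff U₀ U₁ = Finset.univ := by
    rw [Finset.eq_univ_iff_forall]
    intro i
    by_contra hi
    obtain ⟨P, hedgeP, horientP, hsepP⟩ := class_side hmed (hCitheta i)
    have hPv₀u : P v₀ ↔ P u := not_not.mp (fun h => (hnsv₀u i) ((hsepP v₀ u).mpr h))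
    have hPuup : P u ↔ P uplus := by
      have hns : ¬ Separates G (Ci i) (ψ U₀) (ψ U₁) :=
        fun h => hi ((F_sep_coord i U₀ U₁).mp h)
      rw [hU₀, hU₁] at hns
      exact not_not.mp (fun h => hns ((hsepP u uplus).mpr h))
    have hwadj : G.Adj uplus (ψ (symmDiff U₁ {i})) := by
      rw [← hU₁]
      exact cube_adj_flip ψ hψadj U₁ i
    have hwmem : s(uplus, ψ (symmDiff U₁ {i})) ∈ Ci i := by
      rw [← hU₁]
      exact hCimem i U₁
    have hlt : G.dist v₀ uplus < G.dist v₀ (ψ (symmDiff U₁ {i})) :=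
      same_side_dist hmed hwadj (horientP _ _ hwmem) (hPv₀u.trans hPuup)
    have := hanti.2 _ (hψS _) hwadj
    omega
  have hsep_uu : ∀ i, Separates G (Ci i) u uplus := by
    intro i
    rw [← hU₀, ← hU₁]
    exact (F_sep_coord i U₀ U₁).mpr (by rw [hΔ]; exact Finset.mem_univ i)
  have hnot_sep_uu : ∀ C, ThetaClass G C → (∀ i, C ≠ Ci i) → ¬ Separates G C u uplus := by
    intro C hC hne
    rw [← hU₀, ← hU₁]
    exact F_not_sep C hC hne U₀ U₁
  have hsep_v₀up : ∀ i, Separates G (Ci i) v₀ uplus := by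
    intro i
    rw [sep_xor hmed (hCitheta i) v₀ u uplus]
    intro hiff
    exact (hnsv₀u i) (hiff.mpr (hsep_uu i))
  constructor
  · rintro ⟨huI, hlad⟩
    have hdisj1 : Disjoint (signature G v₀ u) (signature G u v) :=
      (interval_iff_disjoint hmed v₀ v u).mp huI
    have hLsub : ∀ i, Separates G (Ci i) u v := by
      intro i
      have hmem : Ci i ∈ ladder G u v := by
        rw [hlad, hLr]
        exact ⟨i, rfl⟩
      exact hmem.1.2
    refine ⟨(interval_iff_disjoint hmed v₀ v uplus).mpr ?_, ?_⟩
    · rw [Set.disjoint_left]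
      rintro C ⟨hC, hsep1⟩ ⟨-, hsep2⟩
      by_cases hCL : ∃ i, C = Ci i
      · obtain ⟨i, rfl⟩ := hCL
        have hx := (sep_xor hmed (hCitheta i) u uplus v).mp (hLsub i)
        exact hx (iff_of_true (hsep_uu i) hsep2)
      · push_neg at hCL
        have hnuu : ¬ Separates G C u uplus := hnot_sep_uu C hC hCL
        have hsepv₀u : Separates G C v₀ u := by
          rw [sep_xor hmed hC v₀ uplus u]
          intro hiff
          exact hnuu (sep_comm (hiff.mp hsep1))
        have hsepuv : Separates G C u v := by
          rw [sep_xor hmed hC u uplus v]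
          intro hiff
          exact hnuu (hiff.mpr hsep2)
        exact Set.disjoint_left.mp hdisj1 ⟨hC, hsepv₀u⟩ ⟨hC, hsepuv⟩
    · intro C hCl hPOF
      obtain ⟨⟨hC, hsepupv⟩, w', hw', hw'C⟩ := hCl
      have hCnotL : ∀ i, C ≠ Ci i := by
        intro i heq
        have hx := (sep_xor hmed (hCitheta i) u uplus v).mp (hLsub i)
        exact hx (iff_of_true (hsep_uu i) (heq ▸ hsepupv))
      have horthi : ∀ i, Orthogonal G C (Ci i) := by
        intro i
        refine hPOF.2 C (Or.inr rfl) (Ci i) (Or.inl ?_) (hCnotL i)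
        rw [hLr]
        exact ⟨i, rfl⟩
      have hstart : ∃ c, G.Adj (ψ U₁) c ∧ s(ψ U₁, c) ∈ C := by
        refine ⟨w', ?_, ?_⟩ <;> rw [hU₁]
        · exact hw'
        · exact hw'C
      obtain ⟨c, hc, hcC⟩ := F_slide C hC hCnotL horthi U₁ U₀ hstart
      have hnuu : ¬ Separates G C u uplus := hnot_sep_uu C hC hCnotL
      have hsepuv : Separates G C u v := by
        rw [sep_xor hmed hC u uplus v]
        intro hiff
        exact hnuu (hiff.mpr hsepupv)
      have hmemlad : C ∈ ladder G u v := by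
        refine ⟨⟨hC, hsepuv⟩, c, ?_, ?_⟩ <;> rw [← hU₀]
        · exact hc
        · exact hcC
      rw [hlad, hLr] at hmemlad
      obtain ⟨i, hi⟩ := hmemlad
      exact (hCnotL i) hi.symm
  · rintro ⟨hupI, hH⟩
    have hdisj2 : Disjoint (signature G v₀ uplus) (signature G uplus v) :=
      (interval_iff_disjoint hmed v₀ v uplus).mp hupI
    have hAint : u ∈ interval G v₀ v := by
      rw [interval_iff_disjoint hmed v₀ v u, Set.disjoint_left]
      rintro C ⟨hC, hsep1⟩ ⟨-, hsep2⟩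
      have hCnotL : ∀ i, C ≠ Ci i := fun i heq => (hnsv₀u i) (heq ▸ hsep1)
      have hnuu := hnot_sep_uu C hC hCnotL
      have hsv₀up : Separates G C v₀ uplus := by
        rw [sep_xor hmed hC v₀ u uplus]
        intro hiff
        exact hnuu (hiff.mp hsep1)
      have hsupv : Separates G C uplus v := by
        rw [sep_xor hmed hC uplus u v]
        intro hiff
        exact hnuu (sep_comm (hiff.mpr hsep2))
      exact Set.disjoint_left.mp hdisj2 ⟨hC, hsv₀up⟩ ⟨hC, hsupv⟩
    have hsepCiuv : ∀ i, Separates G (Ci i) u v := by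
      intro i
      have hnupv : ¬ Separates G (Ci i) uplus v :=
        fun h => Set.disjoint_left.mp hdisj2 ⟨hCitheta i, hsep_v₀up i⟩ ⟨hCitheta i, h⟩
      rw [sep_xor hmed (hCitheta i) u uplus v]
      intro hiff
      exact hnupv (hiff.mp (hsep_uu i))
    refine ⟨hAint, ?_⟩
    apply Set.Subset.antisymm
    · intro C hCl
      obtain ⟨⟨hC, hsepuv⟩, w, hw, hwC⟩ := hCl
      rw [hLr]
      by_contra hCnotin
      have hCnotL : ∀ i, C ≠ Ci i := fun i heq => hCnotin ⟨i, heq.symm⟩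
      have horthi : ∀ i, Orthogonal G C (Ci i) := fun i =>
        orth_of_ladder hmed hC (hCitheta i) (hCnotL i) hw hwC (hEdgeU i) (hMemU i)
          hsepuv (hsepCiuv i)
      have hstart : ∃ c, G.Adj (ψ U₀) c ∧ s(ψ U₀, c) ∈ C := by
        refine ⟨w, ?_, ?_⟩ <;> rw [hU₀]
        · exact hw
        · exact hwC
      obtain ⟨c, hc, hcC⟩ := F_slide C hC hCnotL horthi U₀ U₁ hstart
      have hnuu := hnot_sep_uu C hC hCnotL
      have hsupv : Separates G C uplus v := by
        rw [sep_xor hmed hC uplus u v]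
        intro hiff
        exact hnuu (sep_comm (hiff.mpr hsepuv))
      have hmem : C ∈ ladder G uplus v := by
        refine ⟨⟨hC, hsupv⟩, c, ?_, ?_⟩ <;> rw [← hU₁]
        · exact hc
        · exact hcC
      apply hH C hmem
      constructor
      · rintro D (hD | hD)
        · exact hL.1.1 D hD
        · rw [Set.mem_singleton_iff] at hD
          subst hD
          exact hC
      · rintro D hD E hE hne
        rcases hD with hD | hD <;> rcases hE with hE | hE
        · exact hL.1.2 D hD E hE hne
        · rw [Set.mem_singleton_iff] at hE
          subst hE
          rw [hLr] at hD
          obtain ⟨i, rfl⟩ := hD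
          exact orth_symm (horthi i)
        · rw [Set.mem_singleton_iff] at hD
          subst hD
          rw [hLr] at hE
          obtain ⟨i, rfl⟩ := hE
          exact horthi i
        · rw [Set.mem_singleton_iff] at hD hE
          subst hD
          subst hE
          exact absurd rfl hne
    · intro C hCL
      rw [hLr] at hCL
      obtain ⟨i, rfl⟩ := hCL
      exact ⟨⟨hCitheta i, hsepCiuv i⟩, ψ (symmDiff U₀ {i}), hEdgeU i, hMemU i⟩


end MedianPaper
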